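/- arXiv:2109.04055 — 2 statements merged into one kernel-verified Lean document; each statement's English description precedes it below -/
import Mathlib

section
/- Let X, Y be coinfinite primitive recursive sets with R_X ≤_pr R_Y. Then (X,Y) satisfies the ♦-property if and only if there exists a primitive recursive function q such that #(0^Y)[t] = #(0^X)[q(t)] for infinitely many t; moreover, q can be taken nondecreasing, and '=' can be replaced by '≤'. -/
/-- The equivalence relation `R_X`: `x R_X y` iff both in `X` or `x = y`. -/
def REq (X : Set ℕ) (x y : ℕ) : Prop := (x ∈ X ∧ y ∈ X) ∨ x = y

/-- Primitive recursive reducibility between binary relations on ℕ. -/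
def PrRed (R S : ℕ → ℕ → Prop) : Prop :=
  ∃ f : ℕ → ℕ, Primrec f ∧ ∀ x y, R x y ↔ S (f x) (f y)

/-- pr-bireducibility. -/
def PrEquiv (R S : ℕ → ℕ → Prop) : Prop := PrRed R S ∧ PrRed S R

/-- `X` is a primitive recursive set. -/
def PRSet (X : Set ℕ) : Prop :=
  ∃ f : ℕ → Bool, Primrec f ∧ ∀ n, n ∈ X ↔ f n = true

/-- `#(0^X)[s]`: the number of elements of the complement of `X` that are `≤ s`. -/
noncomputable def zc (X : Set ℕ) (s : ℕ) : ℕ := {k | k ≤ s ∧ k ∉ X}.ncard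

/-- The ♦-property for a pair of sets. -/
def DiamondProp (X Y : Set ℕ) : Prop :=
  ∃ X' Y' : Set ℕ, PRSet X' ∧ PRSet Y' ∧
    PrEquiv (REq X') (REq X) ∧ PrEquiv (REq Y') (REq Y) ∧
    ∀ s, ∃ t, s ≤ t ∧ zc X' t = zc Y' t

open scoped Classical




lemma zc_finite (A : Set ℕ) (s : ℕ) : {k | k ≤ s ∧ k ∉ A}.Finite :=
  (Set.finite_Iic s).subset (fun k hk => hk.1)

lemma zc_zero (A : Set ℕ) : zc A 0 = if 0 ∈ A then 0 else 1 := by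
  unfold zc
  split_ifs with h
  · convert Set.ncard_empty ℕ
    ext k; simp only [Set.mem_setOf_eq, Nat.le_zero, Set.mem_empty_iff_false, iff_false, not_and]
    rintro rfl hk; exact hk h
  · convert Set.ncard_singleton 0
    ext k; simp only [Set.mem_setOf_eq, Nat.le_zero, Set.mem_singleton_iff]
    constructor
    · rintro ⟨rfl, _⟩; rfl
    · rintro rfl; exact ⟨rfl, h⟩

lemma zc_succ (A : Set ℕ) (s : ℕ) :
    zc A (s+1) = zc A s + (if (s+1) ∈ A then 0 else 1) := by
  unfold zc
  split_ifs with h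
  · rw [add_zero]
    congr 1
    ext k; simp only [Set.mem_setOf_eq]
    constructor
    · rintro ⟨hk, hk2⟩
      rcases Nat.le_succ_iff_eq_or_le.mp hk with rfl | h'
      · exact absurd h hk2
      · exact ⟨h', hk2⟩
    · rintro ⟨hk, hk2⟩; exact ⟨hk.trans (Nat.le_succ s), hk2⟩
  · have : {k | k ≤ s + 1 ∧ k ∉ A} = insert (s+1) {k | k ≤ s ∧ k ∉ A} := by
      ext k; simp only [Set.mem_setOf_eq, Set.mem_insert_iff]
      constructor
      · rintro ⟨hk, hk2⟩
        rcases Nat.le_succ_iff_eq_or_le.mp hk with rfl | h'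
        · exact Or.inl rfl
        · exact Or.inr ⟨h', hk2⟩
      · rintro (rfl | ⟨hk, hk2⟩)
        · exact ⟨le_rfl, h⟩
        · exact ⟨hk.trans (Nat.le_succ s), hk2⟩
    rw [this, Set.ncard_insert_of_notMem (by simp) (zc_finite A s)]

lemma zc_succ_cases (A : Set ℕ) (s : ℕ) :
    zc A (s+1) = zc A s ∨ zc A (s+1) = zc A s + 1 := by
  rw [zc_succ]; split_ifs <;> simp

lemma zc_mono (A : Set ℕ) : Monotone (zc A) := by
  apply monotone_nat_of_le_succ
  intro n; rw [zc_succ]; split_ifs <;> simp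

lemma zc_step (A : Set ℕ) (s : ℕ) : zc A (s+1) ≤ zc A s + 1 := by
  rcases zc_succ_cases A s with h | h <;> omega

lemma zc_zero_le (A : Set ℕ) : zc A 0 ≤ 1 := by
  rw [zc_zero]; split_ifs <;> simp

lemma zc_le (A : Set ℕ) (s : ℕ) : zc A s ≤ s + 1 := by
  induction s with
  | zero => exact zc_zero_le A
  | succ n ih => calc zc A (n+1) ≤ zc A n + 1 := zc_step A n
                 _ ≤ n + 1 + 1 := by omega

lemma zc_strict (A : Set ℕ) {x y : ℕ} (hxy : x < y) (hy : y ∉ A) :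
    zc A x < zc A y := by
  have h1 : zc A x ≤ zc A (y-1) := zc_mono A (by omega)
  have : zc A y = zc A (y-1) + 1 := by
    obtain ⟨m, rfl⟩ : ∃ m, y = m + 1 := ⟨y - 1, by omega⟩
    rw [zc_succ]; simp [hy]
  omega

lemma zc_unbounded (A : Set ℕ) (hA : Aᶜ.Infinite) (n : ℕ) : ∃ s, n ≤ zc A s := by
  induction n with
  | zero => exact ⟨0, Nat.zero_le _⟩
  | succ m ih =>
      obtain ⟨s, hs⟩ := ih
      obtain ⟨y, hy, hys⟩ := hA.exists_gt s
      exact ⟨y, by have := zc_strict A hys hy; have := zc_mono A (le_refl s); omega⟩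

/-- count of complement via characteristic function -/
def cnt (f : ℕ → Bool) : ℕ → ℕ :=
  fun s => Nat.rec (bif f 0 then 0 else 1) (fun n ih => ih + (bif f (n+1) then 0 else 1)) s

lemma cnt_zero (f : ℕ → Bool) : cnt f 0 = bif f 0 then 0 else 1 := rfl
lemma cnt_succ (f : ℕ → Bool) (s : ℕ) :
    cnt f (s+1) = cnt f s + (bif f (s+1) then 0 else 1) := rfl

lemma zc_eq_cnt {A : Set ℕ} {f : ℕ → Bool} (hf : ∀ n, n ∈ A ↔ f n = true) (s : ℕ) :
    zc A s = cnt f s := by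
  induction s with
  | zero =>
      rw [zc_zero, cnt_zero]
      by_cases h : 0 ∈ A
      · simp [h, (hf 0).mp h]
      · have : f 0 = false := by
          cases hfe : f 0
          · rfl
          · exact absurd ((hf 0).mpr hfe) h
        simp [h, this]
  | succ n ih =>
      rw [zc_succ, cnt_succ, ih]
      by_cases h : (n+1) ∈ A
      · simp [h, (hf (n+1)).mp h]
      · have : f (n+1) = false := by
          cases hfe : f (n+1)
          · rfl
          · exact absurd ((hf (n+1)).mpr hfe) h
        simp [h, this]

lemma cnt_primrec {f : ℕ → Bool} (hf : Primrec f) : Primrec (cnt f) := by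
  have : Primrec₂ (fun (n : ℕ) (ih : ℕ) => ih + (bif f (n+1) then 0 else 1)) := by
    exact (Primrec.nat_add.comp Primrec.snd
      (Primrec.cond (hf.comp (Primrec.succ.comp Primrec.fst)) (Primrec.const 0)
        (Primrec.const 1))).to₂
  exact Primrec.nat_rec₁ _ this

/-- the set whose complement-count function is `c` -/
def stepSet (c : ℕ → ℕ) : Set ℕ :=
  {n | match n with | 0 => c 0 = 0 | (m+1) => c (m+1) = c m}

lemma stepSet_PRSet {c : ℕ → ℕ} (hc : Primrec c) :
    ∃ f : ℕ → Bool, Primrec f ∧ ∀ n, n ∈ stepSet c ↔ f n = true := by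
  refine ⟨fun n => Nat.casesOn n (decide (c 0 = 0)) (fun m => decide (c (m+1) = c m)), ?_, ?_⟩
  · apply Primrec.nat_casesOn₁
    exact (Primrec.eq.comp (hc.comp Primrec.succ) hc).decide
  · intro n
    cases n with
    | zero => simp [stepSet]
    | succ m => simp [stepSet]

lemma zc_stepSet {c : ℕ → ℕ} (hc0 : c 0 ≤ 1)
    (hmono : ∀ t, c t ≤ c (t+1)) (hstep : ∀ t, c (t+1) ≤ c t + 1) (s : ℕ) :
    zc (stepSet c) s = c s := by
  induction s with
  | zero =>
      rw [zc_zero]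
      by_cases h : (0 : ℕ) ∈ stepSet c
      · have : c 0 = 0 := h
        simp [h, this]
      · have : ¬ (c 0 = 0) := h
        have : c 0 = 1 := by omega
        simp [h, this]
  | succ n ih =>
      rw [zc_succ, ih]
      by_cases h : (n+1) ∈ stepSet c
      · have : c (n+1) = c n := h
        simp [h, this]
      · have h2 : ¬ (c (n+1) = c n) := h
        have h3 : c (n+1) = c n + 1 := by have := hmono n; have := hstep n; omega
        simp [h, h3]

/-- bounded least search -/
def lfind (p : ℕ → Bool) (N : ℕ) : ℕ :=
  Nat.rec (bif p 0 then 0 else 1)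
    (fun n ih => if ih ≤ n then ih else (bif p (n+1) then n+1 else n+2)) N

lemma lfind_spec (p : ℕ → Bool) (N : ℕ) :
    (lfind p N ≤ N ∧ p (lfind p N) = true ∧ ∀ j < lfind p N, p j = false)
    ∨ (lfind p N = N + 1 ∧ ∀ j ≤ N, p j = false) := by
  induction N with
  | zero =>
      cases hp : p 0
      · right
        constructor
        · simp [lfind, hp]
        · intro j hj; rw [Nat.le_zero.mp hj]; exact hp
      · left
        refine ⟨by simp [lfind, hp], by simpa [lfind, hp], by simp [lfind, hp]⟩
  | succ n ih =>
      have hl : lfind p (n+1) = if lfind p n ≤ n then lfind p n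
          else (bif p (n+1) then n+1 else n+2) := rfl
      rcases ih with ⟨h1, h2, h3⟩ | ⟨h1, h2⟩
      · left
        rw [hl, if_pos h1]
        exact ⟨h1.trans (Nat.le_succ n), h2, h3⟩
      · have hnot : ¬ (lfind p n ≤ n) := by omega
        rw [hl, if_neg hnot]
        cases hp : p (n+1)
        · right
          refine ⟨by simp, fun j hj => ?_⟩
          rcases Nat.le_succ_iff_eq_or_le.mp hj with rfl | h'
          · exact hp
          · exact h2 j h'
        · left
          simp only [cond_true]
          refine ⟨le_rfl, hp, fun j hj => h2 j (by omega)⟩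

lemma lfind_found {p : ℕ → Bool} {N k : ℕ} (hk : k ≤ N) (hp : p k = true) :
    lfind p N ≤ N ∧ p (lfind p N) = true ∧ ∀ j < lfind p N, p j = false := by
  rcases lfind_spec p N with h | ⟨_, h2⟩
  · exact h
  · exact absurd hp (by simp [h2 k hk])

lemma lfind_primrec {p : ℕ → ℕ → Bool} (hp : Primrec₂ p) :
    Primrec₂ (fun a N => lfind (p a) N) := by
  have := Primrec.nat_rec (f := fun a => bif p a 0 then 0 else 1)
    (g := fun (a : ℕ) (x : ℕ × ℕ) =>
      if x.2 ≤ x.1 then x.2 else (bif p a (x.1+1) then x.1+1 else x.1+2))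
    (Primrec.cond (hp.comp Primrec.id (Primrec.const 0)) (Primrec.const 0) (Primrec.const 1))
    (Primrec.ite (Primrec.nat_le.comp (Primrec.snd.comp Primrec.snd)
        (Primrec.fst.comp Primrec.snd))
      (Primrec.snd.comp Primrec.snd)
      (Primrec.cond (hp.comp Primrec.fst
          (Primrec.succ.comp (Primrec.fst.comp Primrec.snd)))
        (Primrec.succ.comp (Primrec.fst.comp Primrec.snd))
        (Primrec.succ.comp (Primrec.succ.comp (Primrec.fst.comp Primrec.snd))))).to₂
  exact this.of_eq (fun a N => rfl)

/-- bounded conditional max -/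
def bmaxIf (v : ℕ → ℕ) (p : ℕ → Bool) (N : ℕ) : ℕ :=
  Nat.rec (bif p 0 then v 0 else 0)
    (fun n ih => bif p (n+1) then max (v (n+1)) ih else ih) N

lemma bmaxIf_le_of {v : ℕ → ℕ} {p : ℕ → Bool} {N m : ℕ}
    (h : ∀ s ≤ N, p s = true → v s ≤ m) : bmaxIf v p N ≤ m := by
  induction N with
  | zero =>
      cases hp : p 0
      · simp [bmaxIf, hp]
      · simpa [bmaxIf, hp] using h 0 le_rfl hp
  | succ n ih =>
      have ih' := ih (fun s hs hps => h s (hs.trans (Nat.le_succ n)) hps)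
      cases hp : p (n+1)
      · simpa [bmaxIf, hp] using ih'
      · have := h (n+1) le_rfl hp
        simp only [bmaxIf, hp, cond_true] at *
        omega

lemma le_bmaxIf {v : ℕ → ℕ} {p : ℕ → Bool} {N s : ℕ} (hs : s ≤ N) (hps : p s = true) :
    v s ≤ bmaxIf v p N := by
  induction N with
  | zero =>
      rw [Nat.le_zero.mp hs] at hps ⊢
      simp [bmaxIf, hps]
  | succ n ih =>
      rcases Nat.le_succ_iff_eq_or_le.mp hs with rfl | h'
      · simp [bmaxIf, hps]
      · have := ih h'
        cases hp : p (n+1)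
        · simpa [bmaxIf, hp]
        · simp only [bmaxIf, hp, cond_true] at *
          omega

lemma bmaxIf_primrec {v : ℕ → ℕ} {p : ℕ → ℕ → Bool} (hv : Primrec v) (hp : Primrec₂ p) :
    Primrec₂ (fun a N => bmaxIf v (p a) N) := by
  have := Primrec.nat_rec (f := fun a => bif p a 0 then v 0 else 0)
    (g := fun (a : ℕ) (x : ℕ × ℕ) => bif p a (x.1+1) then max (v (x.1+1)) x.2 else x.2)
    (Primrec.cond (hp.comp Primrec.id (Primrec.const 0)) (Primrec.const (v 0))
      (Primrec.const 0))
    (Primrec.cond (hp.comp Primrec.fst (Primrec.succ.comp (Primrec.fst.comp Primrec.snd)))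
      (Primrec.nat_max.comp (hv.comp (Primrec.succ.comp (Primrec.fst.comp Primrec.snd)))
        (Primrec.snd.comp Primrec.snd))
      (Primrec.snd.comp Primrec.snd)).to₂
  exact this.of_eq (fun a N => rfl)

lemma zc_pos {A : Set ℕ} {x : ℕ} (hx : x ∉ A) : 1 ≤ zc A x := by
  have : zc A 0 ≤ zc A x := zc_mono A (Nat.zero_le x)
  rcases Nat.eq_zero_or_pos x with rfl | hpos
  · rw [zc_zero, if_neg hx]
  · have := zc_strict A hpos hx
    omega

lemma zc_hit {B : Set ℕ} {m v : ℕ} (h1 : v ≤ zc B m) (h2 : ∀ j < m, zc B j < v)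
    (hv : 1 ≤ v) : zc B m = v ∧ m ∉ B := by
  cases m with
  | zero =>
      have h0 := zc_zero_le B
      have he : zc B 0 = v := by omega
      refine ⟨he, fun hmem => ?_⟩
      rw [zc_zero, if_pos hmem] at he
      omega
  | succ m' =>
      have h3 := h2 m' (Nat.lt_succ_self m')
      have h4 := zc_step B m'
      have he : zc B (m'+1) = v := by omega
      refine ⟨he, fun hmem => ?_⟩
      rw [zc_succ, if_pos hmem] at he
      omega

/-- Fact, easy direction: a counting bound yields a reduction of `REq`s. -/
theorem buildRed {A B : Set ℕ} {fA fB : ℕ → Bool}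
    (hfA : Primrec fA) (hA : ∀ n, n ∈ A ↔ fA n = true)
    (hfB : Primrec fB) (hB : ∀ n, n ∈ B ↔ fB n = true)
    {g : ℕ → ℕ} (hg : Primrec g) (hcnt : ∀ s, zc A s ≤ zc B (g s)) :
    PrRed (REq A) (REq B) := by
  have hAz : ∀ x, zc A x = cnt fA x := zc_eq_cnt hA
  have hBz : ∀ x, zc B x = cnt fB x := zc_eq_cnt hB
  have hmemA : ∀ x, x ∈ A ↔ fA x = true := hA
  by_cases hBne : ∃ b0, b0 ∈ B
  · obtain ⟨b0, hb0⟩ := hBne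
    set p : ℕ → ℕ → Bool := fun x m => decide (cnt fA x ≤ cnt fB m) with hp
    have hp2 : Primrec₂ p := by
      refine (PrimrecRel.comp Primrec.nat_le ?_ ?_).decide
      · exact (cnt_primrec hfA).comp Primrec.fst
      · exact (cnt_primrec hfB).comp Primrec.snd
    set F : ℕ → ℕ := fun x => if fA x = true then b0 else lfind (p x) (g x) with hF
    have hFpr : Primrec F := by
      apply Primrec.ite (Primrec.eq.comp hfA (Primrec.const true)) (Primrec.const b0)
      exact (lfind_primrec hp2).comp Primrec.id hg
    -- key properties of F on the complement of A
    have key : ∀ x, x ∉ A → zc B (F x) = zc A x ∧ F x ∉ B := by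
      intro x hx
      have hx1 : 1 ≤ zc A x := zc_pos hx
      have hwit : p x (g x) = true := by
        simp only [hp, decide_eq_true_eq, ← hAz, ← hBz]
        exact hcnt x
      obtain ⟨hle, hpm, hmin⟩ := lfind_found (le_refl (g x)) hwit
      have hFx : F x = lfind (p x) (g x) := by
        rw [hF]; simp only
        rw [if_neg (fun h => hx ((hmemA x).mpr h))]
      rw [hFx]
      have h1 : zc A x ≤ zc B (lfind (p x) (g x)) := by
        have := hpm
        simp only [hp, decide_eq_true_eq] at this
        rw [hAz, hBz]; exact this
      have h2 : ∀ j < lfind (p x) (g x), zc B j < zc A x := by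
        intro j hj
        have := hmin j hj
        simp only [hp, decide_eq_false_iff_not, not_le] at this
        rw [hAz, hBz]; exact this
      exact zc_hit h1 h2 hx1
    refine ⟨F, hFpr, fun x y => ?_⟩
    rcases eq_or_ne x y with rfl | hxy
    · simp [REq]
    constructor
    · rintro (⟨hxA, hyA⟩ | rfl)
      · left
        have hFx : F x = b0 := by rw [hF]; simp [(hmemA x).mp hxA]
        have hFy : F y = b0 := by rw [hF]; simp [(hmemA y).mp hyA]
        rw [hFx, hFy]; exact ⟨hb0, hb0⟩
      · exact absurd rfl hxy
    · intro hR
      by_cases hxA : x ∈ A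
      · by_cases hyA : y ∈ A
        · exact Or.inl ⟨hxA, hyA⟩
        · -- y ∉ A : F y ∉ B, F x = b0 ∈ B; contradiction with hR
          exfalso
          obtain ⟨hyeq, hynB⟩ := key y hyA
          have hFx : F x = b0 := by rw [hF]; simp [(hmemA x).mp hxA]
          rcases hR with ⟨_, h2⟩ | heq
          · exact hynB h2
          · exact hynB (by rw [← heq, hFx]; exact hb0)
      · exfalso
        obtain ⟨hxeq, hxnB⟩ := key x hxA
        rcases hR with ⟨h1, _⟩ | heq
        · exact hxnB h1
        · by_cases hyA : y ∈ A
          · have hFy : F y = b0 := by rw [hF]; simp [(hmemA y).mp hyA]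
            exact hxnB (by rw [heq, hFy]; exact hb0)
          · obtain ⟨hyeq, _⟩ := key y hyA
            have hne : zc A x ≠ zc A y := by
              rcases Nat.lt_or_ge x y with h | h
              · exact Nat.ne_of_lt (zc_strict A h hyA)
              · have : y < x := by omega
                exact (Nat.ne_of_lt (zc_strict A this hxA)).symm
            rw [← hxeq, ← hyeq, heq] at hne
            exact hne rfl
  · -- B is empty
    push_neg at hBne
    set F : ℕ → ℕ := fun x => if fA x = true then 0 else cnt fA x with hF
    have hFpr : Primrec F :=
      Primrec.ite (Primrec.eq.comp hfA (Primrec.const true)) (Primrec.const 0)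
        (cnt_primrec hfA)
    have hFA : ∀ x, x ∈ A → F x = 0 := by
      intro x hx; rw [hF]; simp [(hmemA x).mp hx]
    have hFnA : ∀ x, x ∉ A → F x = zc A x := by
      intro x hx; rw [hF]; simp only
      rw [if_neg (fun h => hx ((hmemA x).mpr h)), hAz]
    refine ⟨F, hFpr, fun x y => ?_⟩
    rcases eq_or_ne x y with rfl | hxy
    · simp [REq]
    constructor
    · rintro (⟨hxA, hyA⟩ | rfl)
      · right; rw [hFA x hxA, hFA y hyA]
      · exact absurd rfl hxy
    · rintro (⟨h1, _⟩ | heq)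
      · exact absurd h1 (hBne _)
      · by_cases hxA : x ∈ A
        · by_cases hyA : y ∈ A
          · exact Or.inl ⟨hxA, hyA⟩
          · exfalso
            rw [hFA x hxA, hFnA y hyA] at heq
            have := zc_pos hyA; omega
        · exfalso
          rw [hFnA x hxA] at heq
          by_cases hyA : y ∈ A
          · rw [hFA y hyA] at heq
            have := zc_pos hxA; omega
          · rw [hFnA y hyA] at heq
            rcases Nat.lt_or_ge x y with h | h
            · exact absurd heq (Nat.ne_of_lt (zc_strict A h hyA))
            · have hyx : y < x := by omega
              exact absurd heq.symm (Nat.ne_of_lt (zc_strict A hyx hxA))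

theorem buildRed' {A B : Set ℕ} (hA : PRSet A) (hB : PRSet B)
    {g : ℕ → ℕ} (hg : Primrec g) (hcnt : ∀ s, zc A s ≤ zc B (g s)) :
    PrRed (REq A) (REq B) := by
  obtain ⟨fA, hfA, hmA⟩ := hA
  obtain ⟨fB, hfB, hmB⟩ := hB
  exact buildRed hfA hmA hfB hmB hg hcnt

lemma zc_le_of_injOn {A B : Set ℕ} {z w : ℕ} (G : ℕ → ℕ)
    (hmaps : ∀ k, k ≤ z → k ∉ A → (G k ≤ w ∧ G k ∉ B))
    (hinj : ∀ k l, k ≤ z → k ∉ A → l ≤ z → l ∉ A → k ≠ l → G k ≠ G l) :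
    zc A z ≤ zc B w := by
  refine Set.ncard_le_ncard_of_injOn G ?_ ?_ (zc_finite B w)
  · rintro k ⟨hk1, hk2⟩
    exact ⟨(hmaps k hk1 hk2).1, (hmaps k hk1 hk2).2⟩
  · rintro k ⟨hk1, hk2⟩ l ⟨hl1, hl2⟩ heq
    by_contra hne
    exact hinj k l hk1 hk2 hl1 hl2 hne heq

/-- Fact, hard direction: every reduction of `REq`s yields a counting bound. -/
theorem extractBound {A B : Set ℕ} (hred : PrRed (REq A) (REq B)) :
    ∃ h : ℕ → ℕ, Primrec h ∧ ∀ s, zc A s ≤ zc B (h s) := by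
  obtain ⟨f, hf, hiff⟩ := hred
  -- basic consequence for "bad" pairs
  have hpair : ∀ x y, x ≠ y → ¬(x ∈ A ∧ y ∈ A) → f x ≠ f y ∧ ¬(f x ∈ B ∧ f y ∈ B) := by
    intro x y hxy hnA
    have : ¬ REq B (f x) (f y) := by
      intro hR
      have : REq A x y := (hiff x y).mpr hR
      rcases this with h | h
      · exact hnA h
      · exact hxy h
    constructor
    · intro h; exact this (Or.inr h)
    · intro h; exact this (Or.inl h)
  -- running max of f
  set M : ℕ → ℕ := fun s => bmaxIf f (fun _ => true) s with hM
  have hMpr : Primrec M := by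
    have : Primrec₂ (fun (_ : ℕ) (N : ℕ) => bmaxIf f (fun _ => true) N) :=
      bmaxIf_primrec hf (Primrec₂.const true)
    exact this.comp Primrec.id Primrec.id
  have hMle : ∀ k s, k ≤ s → f k ≤ M s := by
    intro k s hks
    exact le_bmaxIf hks rfl
  by_cases hbad : ∃ x0, x0 ∉ A ∧ f x0 ∈ B
  · obtain ⟨x0, hx0A, hx0B⟩ := hbad
    have K : ∀ y, y ≠ x0 → f y ∉ B := by
      intro y hy hyB
      exact (hpair x0 y (fun h => hy h.symm) (fun h => hx0A h.1)).2 ⟨hx0B, hyB⟩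
    refine ⟨fun s => M (s + 1 + x0), hMpr.comp
      (Primrec.nat_add.comp (Primrec.succ.comp Primrec.id) (Primrec.const x0)), fun s => ?_⟩
    set w := s + 1 + x0 with hw
    have hwx0 : w ≠ x0 := by omega
    apply zc_le_of_injOn (fun k => if k = x0 then f w else f k)
    · intro k hk hkA
      by_cases hkx : k = x0
      · rw [if_pos hkx]
        exact ⟨hMle w w le_rfl, K w hwx0⟩
      · rw [if_neg hkx]
        exact ⟨hMle k w (by omega), K k hkx⟩
    · intro k l hk hkA hl hlA hkl
      by_cases hkx : k = x0 <;> by_cases hlx : l = x0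
      · exact absurd (hkx.trans hlx.symm) hkl
      · rw [if_pos hkx, if_neg hlx]
        have hwl : w ≠ l := by omega
        exact (hpair w l hwl (fun h => hlA h.2)).1
      · rw [if_neg hkx, if_pos hlx]
        have hkw : k ≠ w := by omega
        exact (hpair k w hkw (fun h => hkA h.1)).1
      · rw [if_neg hkx, if_neg hlx]
        exact (hpair k l hkl (fun h => hkA h.1)).1
  · push_neg at hbad
    refine ⟨M, hMpr, fun s => ?_⟩
    apply zc_le_of_injOn f
    · intro k hk hkA
      exact ⟨hMle k s hk, hbad k hkA⟩
    · intro k l hk hkA hl hlA hkl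
      exact (hpair k l hkl (fun h => hkA h.1)).1

def runmax (f : ℕ → ℕ) (s : ℕ) : ℕ := bmaxIf f (fun _ => true) s

lemma le_runmax (f : ℕ → ℕ) {k s : ℕ} (h : k ≤ s) : f k ≤ runmax f s := le_bmaxIf h rfl

lemma runmax_mono (f : ℕ → ℕ) : Monotone (runmax f) := by
  intro s t hst
  exact bmaxIf_le_of (fun k hk _ => le_bmaxIf (hk.trans hst) rfl)

lemma runmax_primrec {f : ℕ → ℕ} (hf : Primrec f) : Primrec (runmax f) :=
  (bmaxIf_primrec hf (Primrec₂.const true)).comp Primrec.id Primrec.id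

lemma nat_unbounded_infinite {S : Set ℕ} (h : ∀ n, ∃ m, m ∈ S ∧ n < m) : S.Infinite := by
  intro hfin
  obtain ⟨N, hN⟩ := hfin.bddAbove
  obtain ⟨m, hm, hNm⟩ := h N
  exact absurd (hN hm) (by omega)


theorem P1_imp_P2 {X Y : Set ℕ} (hX : PRSet X) (hY : PRSet Y)
    (hYc : Yᶜ.Infinite) (hD : DiamondProp X Y) :
    ∃ q : ℕ → ℕ, Primrec q ∧ {t | zc Y t = zc X (q t)}.Infinite := by
  obtain ⟨fX, hfX, hmX⟩ := hX
  obtain ⟨fY, hfY, hmY⟩ := hY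
  obtain ⟨X'', Y'', _, _, e1, e2, hco⟩ := hD
  obtain ⟨h1, hh1p, hh1⟩ := extractBound e1.1
  obtain ⟨h4, hh4p, hh4⟩ := extractBound e2.2
  set H1 : ℕ → ℕ := runmax h1 with hH1
  set H4 : ℕ → ℕ := fun s => max s (runmax h4 s) with hH4
  have hH1m : Monotone H1 := runmax_mono h1
  have hH4m : Monotone H4 := by
    intro s t hst
    exact max_le_max hst (runmax_mono h4 hst)
  have hH4id : ∀ s, s ≤ H4 s := fun s => le_max_left _ _
  have hH1b : ∀ s, zc X'' s ≤ zc X (H1 s) :=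
    fun s => (hh1 s).trans (zc_mono X (le_runmax h1 le_rfl))
  have hH4b : ∀ s, zc Y s ≤ zc Y'' (H4 s) :=
    fun s => (hh4 s).trans (zc_mono Y'' ((le_runmax h4 le_rfl).trans (le_max_right _ _)))
  set g : ℕ → ℕ := fun t => H1 (H4 (t+1)) with hg
  have hgp : Primrec g := by
    have hp4 : Primrec H4 := Primrec.nat_max.comp Primrec.id (runmax_primrec hh4p)
    exact (runmax_primrec hh1p).comp (hp4.comp Primrec.succ)
  set p : ℕ → ℕ → Bool := fun t s => decide (cnt fY t ≤ cnt fX s) with hp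
  have hp2 : Primrec₂ p :=
    (PrimrecRel.comp Primrec.nat_le ((cnt_primrec hfY).comp Primrec.fst)
      ((cnt_primrec hfX).comp Primrec.snd)).decide
  set q : ℕ → ℕ := fun t => lfind (p t) (g t) with hq
  have hqp : Primrec q := (lfind_primrec hp2).comp Primrec.id hgp
  refine ⟨q, hqp, nat_unbounded_infinite fun n => ?_⟩
  obtain ⟨m0, hm0⟩ := hYc.nonempty
  obtain ⟨t0, ht0ge, ht0⟩ := hco (H4 (max (n+1) m0))
  set T : ℕ := Nat.findGreatest (fun T' => H4 T' ≤ t0) t0 with hT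
  have hTp : H4 T ≤ t0 := by
    rw [hT]
    exact Nat.findGreatest_spec (P := fun T' => H4 T' ≤ t0) (m := max (n+1) m0)
      ((hH4id _).trans ht0ge) ht0ge
  have hTge : max (n+1) m0 ≤ T := by
    rw [hT]
    exact Nat.le_findGreatest ((hH4id _).trans ht0ge) ht0ge
  have hTmax : t0 < H4 (T+1) := by
    rcases Nat.lt_or_ge t0 (T+1) with h | h
    · exact h.trans_le (hH4id (T+1))
    · by_contra hcon
      push_neg at hcon
      have := Nat.findGreatest_is_greatest (P := fun T' => H4 T' ≤ t0)
        (by rw [← hT]; exact Nat.lt_succ_self T) h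
      exact this hcon
  -- the chain of inequalities
  have hchain : zc Y T ≤ zc X (H1 t0) := by
    calc zc Y T ≤ zc Y'' (H4 T) := hH4b T
      _ ≤ zc Y'' t0 := zc_mono Y'' hTp
      _ = zc X'' t0 := ht0.symm
      _ ≤ zc X (H1 t0) := hH1b t0
  have hwit : H1 t0 ≤ g T := hH1m (Nat.le_of_lt_succ (Nat.lt_succ_of_lt hTmax))
  have hYb1 : 1 ≤ zc Y T := zc_pos hm0 |>.trans (zc_mono Y (le_of_max_le_right hTge))
  have hpw : p T (H1 t0) = true := by
    simp only [hp, decide_eq_true_eq, ← zc_eq_cnt hmY, ← zc_eq_cnt hmX]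
    exact hchain
  obtain ⟨hle, hpm, hmin⟩ := lfind_found hwit hpw
  have h1' : zc Y T ≤ zc X (q T) := by
    have := hpm
    simp only [hp, decide_eq_true_eq] at this
    rw [zc_eq_cnt hmY, zc_eq_cnt hmX]
    exact this
  have h2' : ∀ j < q T, zc X j < zc Y T := by
    intro j hj
    have := hmin j hj
    simp only [hp, decide_eq_false_iff_not, not_le] at this
    rw [zc_eq_cnt hmY, zc_eq_cnt hmX]
    exact this
  obtain ⟨heq, -⟩ := zc_hit h1' h2' hYb1
  exact ⟨T, heq.symm, lt_of_lt_of_le (Nat.lt_succ_self n) (le_of_max_le_left hTge)⟩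

theorem P2_imp_P3 {X Y : Set ℕ}
    (h : ∃ q : ℕ → ℕ, Primrec q ∧ {t | zc Y t = zc X (q t)}.Infinite) :
    ∃ q : ℕ → ℕ, Primrec q ∧ Monotone q ∧ {t | zc Y t ≤ zc X (q t)}.Infinite := by
  obtain ⟨q, hq, hinf⟩ := h
  refine ⟨runmax q, runmax_primrec hq, runmax_mono q, hinf.mono ?_⟩
  intro t ht
  exact le_of_eq ht |>.trans (zc_mono X (le_runmax q le_rfl))

lemma infinite_unbounded {S : Set ℕ} (h : S.Infinite) (n : ℕ) : ∃ m ∈ S, n < m := by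
  by_contra hc
  push_neg at hc
  exact h ((Set.finite_Iic n).subset (fun x hx => hc x hx))

theorem P3_imp_P1 {X Y : Set ℕ} (hX : PRSet X) (hY : PRSet Y)
    (hXc : Xᶜ.Infinite) (hYc : Yᶜ.Infinite) (hred : PrRed (REq X) (REq Y))
    (hP3 : ∃ q : ℕ → ℕ, Primrec q ∧ Monotone q ∧ {t | zc Y t ≤ zc X (q t)}.Infinite) :
    DiamondProp X Y := by
  obtain ⟨fX, hfX, hmX⟩ := hX
  obtain ⟨fY, hfY, hmY⟩ := hY
  obtain ⟨q0, hq0p, hq0m, hE⟩ := hP3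
  obtain ⟨h0, hh0p, hh0⟩ := extractBound hred
  set aF : ℕ → ℕ := cnt fX with haFd
  set bF : ℕ → ℕ := cnt fY with hbFd
  have haz : ∀ s, zc X s = aF s := zc_eq_cnt hmX
  have hbz : ∀ s, zc Y s = bF s := zc_eq_cnt hmY
  have haFp : Primrec aF := cnt_primrec hfX
  have hbFp : Primrec bF := cnt_primrec hfY
  have haFm : Monotone aF := fun x y hxy => by rw [← haz, ← haz]; exact zc_mono X hxy
  have hbFm : Monotone bF := fun x y hxy => by rw [← hbz, ← hbz]; exact zc_mono Y hxy
  -- q : monotone, ≥ id, still good on E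
  set q : ℕ → ℕ := fun t => max (q0 t) t with hqd
  have hqp : Primrec q := Primrec.nat_max.comp hq0p Primrec.id
  have hqm : Monotone q := fun x y hxy => max_le_max (hq0m hxy) hxy
  have hqid : ∀ t, t ≤ q t := fun t => le_max_right _ _
  have hqE : ∀ t, zc Y t ≤ zc X (q0 t) → zc Y t ≤ zc X (q t) :=
    fun t ht => ht.trans (zc_mono X (le_max_left _ _))
  -- h : X-count dominated by Y-count along h
  set h : ℕ → ℕ := fun s => max s (runmax h0 s) with hhd
  have hhp : Primrec h := Primrec.nat_max.comp Primrec.id (runmax_primrec hh0p)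
  have hhb : ∀ s, zc X s ≤ zc Y (h s) :=
    fun s => (hh0 s).trans (zc_mono Y ((le_runmax h0 le_rfl).trans (le_max_right _ _)))
  -- Θ : the spreading clock
  set Θ : ℕ → ℕ := fun m => Nat.rec 0 (fun n ih => ih + q n + aF (q n) + 1) m with hΘd
  have hΘp : Primrec Θ := by
    apply Primrec.nat_rec₁
    exact (Primrec.succ.comp (Primrec.nat_add.comp
      (Primrec.nat_add.comp Primrec.snd (hqp.comp Primrec.fst))
      (haFp.comp (hqp.comp Primrec.fst)))).to₂
  have hΘ0 : Θ 0 = 0 := rfl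
  have hΘs : ∀ m, Θ (m+1) = Θ m + q m + aF (q m) + 1 := fun m => rfl
  have hΘstrictm : StrictMono Θ := strictMono_nat_of_lt_succ (fun n => by rw [hΘs]; omega)
  have hΘmono : Monotone Θ := hΘstrictm.monotone
  have hΘid : ∀ m, m ≤ Θ m := fun m => by
    induction m with
    | zero => simp [hΘ0]
    | succ n ih => rw [hΘs]; omega
  -- ψ : inverse of Θ
  set ψ : ℕ → ℕ := fun u => Nat.findGreatest (fun w => Θ w ≤ u) u with hψd
  have hψp : Primrec ψ := by
    apply Primrec.nat_findGreatest Primrec.id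
    exact PrimrecRel.comp Primrec.nat_le (hΘp.comp Primrec.snd) Primrec.fst
  have hψle : ∀ u, Θ (ψ u) ≤ u := by
    intro u
    exact Nat.findGreatest_spec (P := fun w => Θ w ≤ u) (m := 0) (Nat.zero_le u)
      (show Θ 0 ≤ u from by rw [hΘ0]; exact Nat.zero_le u)
  have hψge : ∀ w u, Θ w ≤ u → w ≤ ψ u := by
    intro w u hw
    exact Nat.le_findGreatest ((hΘid w).trans hw) hw
  have hψΘ : ∀ w, ψ (Θ w) = w := by
    intro w
    have h1 : w ≤ ψ (Θ w) := hψge w (Θ w) le_rfl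
    have h2 : Θ (ψ (Θ w)) ≤ Θ w := hψle (Θ w)
    exact le_antisymm (hΘstrictm.le_iff_le.mp h2) h1
  have hψmono : Monotone ψ := fun u u' huu =>
    hψge (ψ u) u' ((hψle u).trans huu)
  have hψid : ∀ u, ψ u ≤ u := fun u => Nat.findGreatest_le u
  have hψstep : ∀ u, ψ (u+1) ≤ ψ u + 1 := by
    intro u
    by_contra hcon
    push_neg at hcon
    have h2 : ψ u + 1 ≤ ψ (u+1) - 1 := by omega
    have h3 : Θ (ψ (u+1) - 1) < Θ (ψ (u+1)) := hΘstrictm (by omega)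
    have h4 : Θ (ψ (u+1)) ≤ u + 1 := hψle (u+1)
    have h5 : Θ (ψ (u+1) - 1) ≤ u := by omega
    have := hψge _ _ h5
    omega
  -- Y' : slowed-down copy of Y
  set dF : ℕ → ℕ := fun u => bF (ψ u) with hdFd
  have hdFp : Primrec dF := hbFp.comp hψp
  set Y' : Set ℕ := stepSet dF with hY'd
  have hd0 : dF 0 ≤ 1 := by
    have : ψ 0 = 0 := Nat.le_zero.mp (hψid 0)
    rw [hdFd]; simp only [this, ← hbz]
    exact zc_zero_le Y
  have hdmono : ∀ u, dF u ≤ dF (u+1) := fun u => hbFm (hψmono (Nat.le_succ u))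
  have hdstep : ∀ u, dF (u+1) ≤ dF u + 1 := by
    intro u
    calc bF (ψ (u+1)) ≤ bF (ψ u + 1) := hbFm (hψstep u)
      _ ≤ bF (ψ u) + 1 := by rw [← hbz, ← hbz]; exact zc_step Y (ψ u)
  have hzcY' : ∀ u, zc Y' u = bF (ψ u) := zc_stepSet hd0 hdmono hdstep
  have hY'pr : PRSet Y' := stepSet_PRSet hdFp
  -- R : release times
  set p1 : ℕ → ℕ → Bool := fun s u => decide (aF s ≤ bF (ψ u)) with hp1d
  have hp1p : Primrec₂ p1 :=
    (PrimrecRel.comp Primrec.nat_le (haFp.comp Primrec.fst)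
      (hbFp.comp (hψp.comp Primrec.snd))).decide
  set R : ℕ → ℕ := fun s => lfind (p1 s) (Θ (h s)) with hRd
  have hRp : Primrec R := (lfind_primrec hp1p).comp Primrec.id (hΘp.comp hhp)
  have hRwit : ∀ s, p1 s (Θ (h s)) = true := by
    intro s
    rw [hp1d]
    simp only [decide_eq_true_eq, hψΘ]
    rw [← haz, ← hbz]
    exact hhb s
  have hRfound : ∀ s, R s ≤ Θ (h s) ∧ aF s ≤ bF (ψ (R s)) ∧
      ∀ j < R s, bF (ψ j) < aF s := by
    intro s
    obtain ⟨h1, h2, h3⟩ := lfind_found (le_refl (Θ (h s))) (hRwit s)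
    refine ⟨h1, by simpa [hp1d] using h2, fun j hj => ?_⟩
    have := h3 j hj
    simp only [hp1d, decide_eq_false_iff_not, not_le] at this
    exact this
  -- ρ : released values
  set p2 : ℕ → ℕ → Bool := fun u s => decide (R s ≤ u) with hp2d
  have hp2p : Primrec₂ p2 :=
    (PrimrecRel.comp Primrec.nat_le (hRp.comp Primrec.snd) Primrec.fst).decide
  set ρ : ℕ → ℕ := fun u => bmaxIf aF (p2 u) u with hρd
  have hρp : Primrec ρ := (bmaxIf_primrec haFp hp2p).comp Primrec.id Primrec.id
  have hρlb : ∀ s u, s ≤ u → R s ≤ u → aF s ≤ ρ u := by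
    intro s u hsu hRu
    exact le_bmaxIf hsu (by simp [hp2d, hRu])
  have hρle_d : ∀ u, ρ u ≤ bF (ψ u) := by
    intro u
    apply bmaxIf_le_of
    intro s hsu hps
    have hRu : R s ≤ u := by simpa [hp2d] using hps
    exact ((hRfound s).2.1).trans (hbFm (hψmono hRu))
  have hρmono : Monotone ρ := by
    intro u u' huu
    apply bmaxIf_le_of
    intro s hsu hps
    have hRu : R s ≤ u := by simpa [hp2d] using hps
    exact hρlb s u' (hsu.trans huu) (hRu.trans huu)
  -- target and pursuit
  set TT : ℕ → ℕ := fun u => min (aF (q u)) (ρ u) with hTTd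
  have hTTp : Primrec TT := Primrec.nat_min.comp (haFp.comp hqp) hρp
  have hTTmono : Monotone TT := fun u u' huu =>
    min_le_min (haFm (hqm huu)) (hρmono huu)
  set cF : ℕ → ℕ := fun u => Nat.rec (min (TT 0) 1) (fun n ih => min (TT (n+1)) (ih + 1)) u
    with hcFd
  have hcFp : Primrec cF := by
    apply Primrec.nat_rec₁
    exact (Primrec.nat_min.comp (hTTp.comp (Primrec.succ.comp Primrec.fst))
      (Primrec.succ.comp Primrec.snd)).to₂
  have hcF0 : cF 0 = min (TT 0) 1 := rfl
  have hcFs : ∀ u, cF (u+1) = min (TT (u+1)) (cF u + 1) := fun u => rfl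
  have hcle : ∀ u, cF u ≤ TT u := by
    intro u
    cases u with
    | zero => rw [hcF0]; exact min_le_left _ _
    | succ n => rw [hcFs]; exact min_le_left _ _
  have hc0 : cF 0 ≤ 1 := by rw [hcF0]; exact min_le_right _ _
  have hcmono : ∀ u, cF u ≤ cF (u+1) := by
    intro u
    rw [hcFs]
    exact le_min ((hcle u).trans (hTTmono (Nat.le_succ u))) (by omega)
  have hcstep : ∀ u, cF (u+1) ≤ cF u + 1 := fun u => by rw [hcFs]; exact min_le_right _ _
  have hcleu : ∀ u, cF u ≤ u + 1 := by
    intro u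
    induction u with
    | zero => exact hc0
    | succ n ih => have := hcstep n; omega
  have hpursuit : ∀ u0 L, (∀ u, u0 ≤ u → L ≤ TT u) → ∀ k, min L (cF u0 + k) ≤ cF (u0 + k) := by
    intro u0 L hL k
    induction k with
    | zero => simp
    | succ n ih =>
        have h1 : cF (u0 + n + 1) = min (TT (u0 + n + 1)) (cF (u0 + n) + 1) := hcFs _
        have h2 : L ≤ TT (u0 + n + 1) := hL _ (by omega)
        have : u0 + (n+1) = u0 + n + 1 := by omega
        rw [this, h1]
        omega
  have hcreach : ∀ s, aF s ≤ cF (max (R s) s + aF s) := by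
    intro s
    have hL : ∀ u, max (R s) s ≤ u → aF s ≤ TT u := by
      intro u hu
      apply le_min
      · exact haFm ((le_of_max_le_right hu).trans (hqid u))
      · exact hρlb s u (le_of_max_le_right hu) ((le_max_left _ _).trans hu)
    have := hpursuit (max (R s) s) (aF s) hL (aF s)
    omega
  set X' : Set ℕ := stepSet cF with hX'd
  have hzcX' : ∀ u, zc X' u = cF u :=
    zc_stepSet hc0 (fun t => hcmono t) (fun t => hcstep t)
  have hX'pr : PRSet X' := stepSet_PRSet hcFp
  -- the four reductions
  have hXpr : PRSet X := ⟨fX, hfX, hmX⟩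
  have hYpr : PRSet Y := ⟨fY, hfY, hmY⟩
  have red1 : PrRed (REq X') (REq X) := by
    apply buildRed' hX'pr hXpr hqp
    intro s
    rw [hzcX' s, haz]
    exact (hcle s).trans (min_le_left _ _)
  have red2 : PrRed (REq X) (REq X') := by
    apply buildRed' hXpr hX'pr
      (Primrec.nat_add.comp (Primrec.nat_max.comp hRp Primrec.id) haFp)
    intro s
    rw [hzcX' _, haz]
    exact hcreach s
  have red3 : PrRed (REq Y') (REq Y) := by
    apply buildRed' hY'pr hYpr Primrec.id
    intro u
    rw [hzcY' u, hbz]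
    exact hbFm (hψid u)
  have red4 : PrRed (REq Y) (REq Y') := by
    apply buildRed' hYpr hY'pr hΘp
    intro s
    rw [hzcY' _, hbz, hψΘ]
  refine ⟨X', Y', hX'pr, hY'pr, ⟨red1, red2⟩, ⟨red3, red4⟩, fun s0 => ?_⟩
  -- find a coincidence point beyond s0
  obtain ⟨s1, hs1⟩ := zc_unbounded Y hYc (s0+1)
  obtain ⟨t, htE, hts1⟩ := infinite_unbounded hE s1
  have hvt : zc Y t ≤ zc X (q t) := hqE t htE
  set v : ℕ := aF (q t) with hvd
  have hbtv : bF t ≤ v := by rw [hvd, ← hbz, ← haz]; exact hvt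
  have hv1 : s0 + 1 ≤ v := by
    calc s0 + 1 ≤ zc Y s1 := hs1
      _ ≤ zc Y t := zc_mono Y (le_of_lt hts1)
      _ ≤ zc X (q t) := hvt
      _ = v := haz _
  -- w1 : first moment where zc Y exceeds v
  have wex : ∃ w, v + 1 ≤ bF w := by
    obtain ⟨w, hw⟩ := zc_unbounded Y hYc (v+1)
    exact ⟨w, by rwa [← hbz]⟩
  set w1 : ℕ := Nat.find wex with hw1d
  have hw1 : v + 1 ≤ bF w1 := Nat.find_spec wex
  have hw1min : ∀ j < w1, bF j < v + 1 := by
    intro j hj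
    have := Nat.find_min wex hj
    omega
  have htw1 : t < w1 := by
    by_contra hcon
    push_neg at hcon
    have := hbFm hcon
    omega
  -- w0 : first moment where zc Y reaches v
  have w0ex : ∃ w, v ≤ bF w := ⟨w1, by omega⟩
  set w0 : ℕ := Nat.find w0ex with hw0d
  have hw0 : v ≤ bF w0 := Nat.find_spec w0ex
  have hw0min : ∀ j < w0, bF j < v := by
    intro j hj
    have := Nat.find_min w0ex hj
    omega
  have hw0v : bF w0 = v := by
    have h1 : v ≤ zc Y w0 := by rwa [hbz]
    have h2 : ∀ j < w0, zc Y j < v := by intro j hj; rw [hbz]; exact hw0min j hj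
    have := (zc_hit h1 h2 (by omega)).1
    rw [hbz] at this
    exact this
  have hw0w1 : w0 < w1 := by
    have h1 : w0 ≤ w1 := Nat.find_min' w0ex (by omega)
    rcases lt_or_eq_of_le h1 with h | h
    · exact h
    · rw [h] at hw0v; omega
  -- release time of value v comes early
  have hRs : R (q t) ≤ Θ w0 := by
    have hw0hs : w0 ≤ h (q t) := by
      by_contra hcon
      push_neg at hcon
      have h1 : zc X (q t) ≤ zc Y (h (q t)) := hhb (q t)
      rw [haz, hbz] at h1
      have := hw0min (h (q t)) hcon
      omega
    have hwit : p1 (q t) (Θ w0) = true := by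
      rw [hp1d]
      simp only [decide_eq_true_eq, hψΘ]
      omega
    obtain ⟨hle, hpm, hmin⟩ := lfind_found (hΘmono hw0hs) hwit
    by_contra hcon
    push_neg at hcon
    have := hmin (Θ w0) hcon
    rw [hwit] at this
    exact Bool.noConfusion this
  -- the coincidence point
  set u' : ℕ := max (R (q t)) (q t) + v with hu'd
  have hcv : v ≤ cF u' := hcreach (q t)
  have hΘw1 : u' < Θ w1 := by
    obtain ⟨m, hm⟩ : ∃ m, w1 = m + 1 := ⟨w1 - 1, by omega⟩
    have hmt : t ≤ m := by omega
    have hmw0 : w0 ≤ m := by omega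
    have h1 : Θ w1 = Θ m + q m + aF (q m) + 1 := by rw [hm]
    have h2 : q t ≤ q m := hqm hmt
    have h3 : v ≤ aF (q m) := haFm h2
    have h4 : R (q t) ≤ Θ m := hRs.trans (hΘmono hmw0)
    rw [hu'd]
    omega
  have hdv : bF (ψ u') ≤ v := by
    by_contra hcon
    push_neg at hcon
    have h1 : w1 ≤ ψ u' := Nat.find_min' wex (by omega)
    have := (hΘmono h1).trans (hψle u')
    omega
  have hcd : cF u' ≤ bF (ψ u') := ((hcle u').trans (min_le_right _ _)).trans (hρle_d u')
  have hfinal : cF u' = v ∧ bF (ψ u') = v := by omega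
  refine ⟨u', ?_, ?_⟩
  · have := hcleu u'
    omega
  · rw [hzcX' u', hzcY' u', hfinal.1, hfinal.2]

theorem stmt_15 (X Y : Set ℕ) (hX : PRSet X) (hY : PRSet Y)
    (hXc : Xᶜ.Infinite) (hYc : Yᶜ.Infinite)
    (hred : PrRed (REq X) (REq Y)) :
    (DiamondProp X Y ↔
      ∃ q : ℕ → ℕ, Primrec q ∧ {t | zc Y t = zc X (q t)}.Infinite) ∧
    (DiamondProp X Y ↔
      ∃ q : ℕ → ℕ, Primrec q ∧ Monotone q ∧ {t | zc Y t ≤ zc X (q t)}.Infinite) := by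
  constructor
  · constructor
    · intro h1
      exact P1_imp_P2 hX hY hYc h1
    · intro h2
      exact P3_imp_P1 hX hY hXc hYc hred (P2_imp_P3 h2)
  · constructor
    · intro h1
      exact P2_imp_P3 (P1_imp_P2 hX hY hYc h1)
    · intro h3
      exact P3_imp_P1 hX hY hXc hYc hred h3
end

section
/- For a coinfinite primitive recursive set X, define X^{[-1]} by removing the least element of the complement of X (i.e., X^{[-1]}(n) = 1 if n is the least element not in X, and X^{[-1]}(n) = X(n) otherwise). Then R_{X^{[-1]}} <_pr R_X if and only if R_X <_pr Id. -/
/-- `X^{[-1]}`: add the least element of the complement of `X` into `X`. -/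
noncomputable def remOne (X : Set ℕ) : Set ℕ := insert (sInf Xᶜ) X

namespace Stmt18Aux

/-- bounded counting: number of `k ≤ s` with `P n k = true`. -/
def csumF (P : ℕ → ℕ → Bool) (n s : ℕ) : ℕ :=
  Nat.rec (motive := fun _ => ℕ) (bif P n 0 then 1 else 0)
    (fun k ih => ih + bif P n (k+1) then 1 else 0) s

theorem csumF_primrec {P : ℕ → ℕ → Bool} (hP : Primrec₂ P) : Primrec₂ (csumF P) :=
  Primrec.nat_rec
    (Primrec.cond (hP.comp .id (.const 0)) (.const 1) (.const 0))
    ((Primrec.nat_add.comp (Primrec.snd.comp Primrec.snd)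
      (Primrec.cond (hP.comp Primrec.fst (Primrec.succ.comp (Primrec.fst.comp Primrec.snd)))
        (.const 1) (.const 0))).to₂)

theorem csumF_card (P : ℕ → ℕ → Bool) (n s : ℕ) :
    csumF P n s = ((Finset.range (s+1)).filter fun k => P n k = true).card := by
  induction s with
  | zero =>
    cases h : P n 0 <;> simp [csumF, h, Finset.range_one, Finset.filter_singleton]
  | succ s ih =>
    have : Finset.range (s+2) = insert (s+1) (Finset.range (s+1)) := by
      rw [Finset.range_add_one]
    rw [this, Finset.filter_insert]
    cases h : P n (s+1) <;>
      simp [csumF, h, Finset.card_insert_of_notMem, Finset.notMem_range_self] <;>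
      exact ih

/-- max of `g` over `[0,s]`. -/
def maxF (g : ℕ → ℕ) (s : ℕ) : ℕ :=
  Nat.rec (motive := fun _ => ℕ) (g 0) (fun k ih => max ih (g (k+1))) s

theorem maxF_primrec {g : ℕ → ℕ} (hg : Primrec g) : Primrec (maxF g) :=
  Primrec.nat_rec₁ (g 0)
    (Primrec₂.comp₂ Primrec.nat_max Primrec₂.right
      ((hg.comp (Primrec.succ.comp Primrec.fst)).to₂))

theorem le_maxF (g : ℕ → ℕ) {i s : ℕ} (h : i ≤ s) : g i ≤ maxF g s := by
  induction s with
  | zero => simp_all [maxF]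
  | succ s ih =>
    rcases Nat.lt_succ_iff_lt_or_eq.1 (Nat.lt_succ_of_le h) with h' | h'
    · exact le_trans (ih (Nat.lt_succ_iff.1 h')) (le_max_left _ _)
    · subst h'; exact le_max_right _ _

/-- iterate `q` starting from `0`. -/
def iterF (q : ℕ → ℕ) (s : ℕ) : ℕ :=
  Nat.rec (motive := fun _ => ℕ) 0 (fun _ ih => q ih) s

theorem iterF_primrec {q : ℕ → ℕ} (hq : Primrec q) : Primrec (iterF q) :=
  Primrec.nat_rec₁ 0 ((hq.comp Primrec.snd).to₂)




open Classical in
theorem zc_eq_card (X : Set ℕ) (t : ℕ) :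
    zc X t = ((Finset.range (t+1)).filter fun k => k ∉ X).card := by
  rw [zc, ← Set.ncard_coe_finset]
  congr 1
  ext k
  simp [Nat.lt_succ_iff]

open Classical in
theorem zc_mono (X : Set ℕ) {t t' : ℕ} (h : t ≤ t') : zc X t ≤ zc X t' := by
  rw [zc_eq_card, zc_eq_card]
  exact Finset.card_le_card (Finset.filter_subset_filter _
    (Finset.range_subset_range.2 (by omega)))

open Classical in
theorem zc_zero (X : Set ℕ) : zc X 0 = if 0 ∈ X then 0 else 1 := by
  rw [zc_eq_card]
  by_cases h : (0:ℕ) ∈ X <;>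
    simp [Finset.range_one, Finset.filter_singleton, h]

open Classical in
theorem zc_succ (X : Set ℕ) (t : ℕ) :
    zc X (t+1) = zc X t + (if t+1 ∈ X then 0 else 1) := by
  rw [zc_eq_card, zc_eq_card]
  have : Finset.range (t+2) = insert (t+1) (Finset.range (t+1)) := by
    rw [Finset.range_add_one]
  rw [this, Finset.filter_insert]
  by_cases h : (t+1) ∈ X
  · simp [h]
  · simp only [h, if_neg, not_false_iff, if_pos]
    rw [Finset.card_insert_of_notMem (by simp)]

open Classical in
theorem zc_pos (X : Set ℕ) {k t : ℕ} (hk : k ≤ t) (hkX : k ∉ X) : 1 ≤ zc X t := by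
  rw [zc_eq_card]
  exact Finset.card_pos.2 ⟨k, Finset.mem_filter.2 ⟨Finset.mem_range.2 (by omega), hkX⟩⟩

open Classical in
theorem zc_unbounded (X : Set ℕ) (hXc : Xᶜ.Infinite) (n : ℕ) : ∃ k, n ≤ zc X k := by
  obtain ⟨S, hS, hcard⟩ := hXc.exists_subset_card_eq n
  refine ⟨S.sup id, ?_⟩
  rw [zc_eq_card]
  rw [← hcard]
  apply Finset.card_le_card
  intro x hx
  refine Finset.mem_filter.2 ⟨Finset.mem_range.2 ?_, hS hx⟩
  have := Finset.le_sup (f := id) hx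
  simpa using Nat.lt_succ_of_le this

/-- the `n`-th element of the complement of `X` (0-indexed). -/
noncomputable def enum (X : Set ℕ) (n : ℕ) : ℕ := sInf {k | n+1 ≤ zc X k}

theorem enum_spec (X : Set ℕ) (hXc : Xᶜ.Infinite) (n : ℕ) :
    zc X (enum X n) = n+1 ∧ enum X n ∉ X := by
  have hne : {k | n+1 ≤ zc X k}.Nonempty := by
    obtain ⟨k, hk⟩ := zc_unbounded X hXc (n+1); exact ⟨k, hk⟩
  have hk : n+1 ≤ zc X (enum X n) := Nat.sInf_mem hne
  have hmin : ∀ j, j < enum X n → zc X j ≤ n := by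
    intro j hj
    have := Nat.notMem_of_lt_sInf hj
    simp only [Set.mem_setOf_eq, not_le] at this
    omega
  rcases h : enum X n with _ | j
  · rw [h] at hk
    rw [zc_zero] at hk ⊢
    by_cases h0 : (0:ℕ) ∈ X <;> simp [h0] at hk ⊢ <;> omega
  · have hj : zc X j ≤ n := by
      apply hmin; omega
    rw [h] at hk
    rw [zc_succ] at hk ⊢
    by_cases h1 : (j+1) ∈ X <;> simp [h1] at hk ⊢ <;> omega

theorem enum_not_mem (X : Set ℕ) (hXc : Xᶜ.Infinite) (n : ℕ) : enum X n ∉ X :=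
  (enum_spec X hXc n).2

theorem enum_lt_iff (X : Set ℕ) (hXc : Xᶜ.Infinite) {n k : ℕ} :
    k < enum X n ↔ zc X k ≤ n := by
  constructor
  · intro hj
    have := Nat.notMem_of_lt_sInf hj
    simp only [Set.mem_setOf_eq, not_le] at this
    omega
  · intro hzc
    by_contra hlt
    push_neg at hlt
    have := zc_mono X hlt
    have := (enum_spec X hXc n).1
    omega

theorem enum_strictMono (X : Set ℕ) (hXc : Xᶜ.Infinite) : StrictMono (enum X) := by
  apply strictMono_nat_of_lt_succ
  intro n
  rw [enum_lt_iff X hXc, (enum_spec X hXc n).1]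

theorem enum_zero (X : Set ℕ) (hXc : Xᶜ.Infinite) : enum X 0 = sInf Xᶜ := by
  apply le_antisymm
  · apply Nat.sInf_le
    have hm : sInf Xᶜ ∉ X := Nat.sInf_mem (hXc.nonempty)
    exact zc_pos X le_rfl hm
  · exact Nat.sInf_le (enum_not_mem X hXc 0)

theorem enum_le (X : Set ℕ) {n B : ℕ} (h : n+1 ≤ zc X B) : enum X n ≤ B :=
  Nat.sInf_le h

theorem not_primrec {fX : ℕ → Bool} (h : Primrec fX) : Primrec fun k => !fX k :=
  (Primrec.cond h (Primrec.const false) (Primrec.const true)).of_eq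
    (fun k => by cases fX k <;> rfl)

open Classical in
theorem cF_eq {X : Set ℕ} {fX : ℕ → Bool} (hfX : ∀ n, n ∈ X ↔ fX n = true) (s : ℕ) :
    csumF (fun _ k => !fX k) 0 s = zc X s := by
  rw [csumF_card, zc_eq_card]
  congr 1
  apply Finset.filter_congr
  intro k _
  simp [hfX, Bool.not_eq_true']

theorem enum_primrec {X : Set ℕ} {fX : ℕ → Bool} (hprim : Primrec fX)
    (hfX : ∀ n, n ∈ X ↔ fX n = true) (hXc : Xᶜ.Infinite)
    {r : ℕ → ℕ} (hrprim : Primrec r) (hr : ∀ s, s ≤ zc X (r s)) :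
    Primrec (enum X) := by
  set cF : ℕ → ℕ := fun s => csumF (fun _ k => !fX k) 0 s with hcFdef
  have hcF : Primrec cF :=
    (csumF_primrec ((not_primrec hprim).comp Primrec.snd).to₂).comp (.const 0) .id
  set P : ℕ → ℕ → Bool := fun n k => decide (cF k ≤ n) with hPdef
  have hP : Primrec₂ P := (Primrec.nat_le.comp (hcF.comp Primrec.snd) Primrec.fst).decide
  have hE : Primrec fun n => csumF P n (r (n+1)) :=
    (csumF_primrec hP).comp .id (hrprim.comp Primrec.succ)
  apply hE.of_eq
  intro n
  rw [csumF_card]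
  have hfe : (Finset.range (r (n+1) + 1)).filter (fun k => P n k = true)
      = Finset.range (enum X n) := by
    ext k
    simp only [Finset.mem_filter, Finset.mem_range, hPdef, decide_eq_true_iff, hcFdef,
      cF_eq hfX]
    constructor
    · intro ⟨_, h2⟩
      exact (enum_lt_iff X hXc).2 h2
    · intro hk
      refine ⟨?_, (enum_lt_iff X hXc).1 hk⟩
      have : enum X n ≤ r (n+1) := enum_le X (hr (n+1))
      omega
  rw [hfe, Finset.card_range]

end Stmt18Aux

namespace Stmt18Main
open Stmt18Aux

def Fast (X : Set ℕ) : Prop := ∃ r : ℕ → ℕ, Primrec r ∧ ∀ s, s ≤ zc X (r s)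

theorem lemC {X : Set ℕ} {fX : ℕ → Bool} (hprim : Primrec fX)
    (hfX : ∀ n, n ∈ X ↔ fX n = true) :
    PrRed (REq X) (fun a b : ℕ => a = b) := by
  refine ⟨fun x => bif fX x then 0 else x+1,
    Primrec.cond hprim (.const 0) Primrec.succ, ?_⟩
  intro x y
  have hx := hfX x
  have hy := hfX y
  constructor
  · rintro (⟨hxX, hyX⟩ | rfl)
    · simp only [hx.1 hxX, hy.1 hyX]
      rfl
    · rfl
  · intro h
    simp only at h
    cases hfx : fX x <;> cases hfy : fX y <;> rw [hfx, hfy] at h <;> simp at h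
    · exact Or.inr h
    · exact Or.inl ⟨hx.2 hfx, hy.2 hfy⟩

theorem lemD {X : Set ℕ} (hXc : Xᶜ.Infinite) :
    PrRed (REq (remOne X)) (REq X) := by
  have hm : sInf Xᶜ ∈ Xᶜ := Nat.sInf_mem hXc.nonempty
  by_cases hXe : X.Nonempty
  · obtain ⟨x₀, hx₀⟩ := hXe
    refine ⟨fun x => if x = sInf Xᶜ then x₀ else x,
      Primrec.ite (Primrec.eq.comp .id (.const (sInf Xᶜ))) (.const x₀) .id, ?_⟩
    intro x y
    simp only [REq, remOne, Set.mem_insert_iff]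
    by_cases hx : x = sInf Xᶜ <;> by_cases hy : y = sInf Xᶜ
    · rw [if_pos hx, if_pos hy]
      constructor
      · intro _; exact Or.inr rfl
      · intro _; exact Or.inr (hx.trans hy.symm)
    · rw [if_pos hx, if_neg hy]
      constructor
      · rintro (⟨_, (rfl | hyX)⟩ | rfl)
        · exact absurd rfl hy
        · exact Or.inl ⟨hx₀, hyX⟩
        · exact absurd hx hy
      · rintro (⟨_, hyX⟩ | rfl)
        · exact Or.inl ⟨Or.inl hx, Or.inr hyX⟩
        · exact Or.inl ⟨Or.inl hx, Or.inr hx₀⟩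
    · rw [if_neg hx, if_pos hy]
      constructor
      · rintro (⟨(rfl | hxX), _⟩ | rfl)
        · exact absurd rfl hx
        · exact Or.inl ⟨hxX, hx₀⟩
        · exact absurd hy hx
      · rintro (⟨hxX, _⟩ | rfl)
        · exact Or.inl ⟨Or.inr hxX, Or.inl hy⟩
        · exact Or.inl ⟨Or.inr hx₀, Or.inl hy⟩
    · rw [if_neg hx, if_neg hy]
      constructor
      · rintro (⟨(rfl | hxX), (rfl | hyX)⟩ | rfl)
        · exact absurd rfl hx
        · exact absurd rfl hx
        · exact absurd rfl hy
        · exact Or.inl ⟨hxX, hyX⟩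
        · exact Or.inr rfl
      · rintro (⟨hxX, hyX⟩ | rfl)
        · exact Or.inl ⟨Or.inr hxX, Or.inr hyX⟩
        · exact Or.inr rfl
  · have hXe' : X = ∅ := Set.not_nonempty_iff_eq_empty.1 hXe
    subst hXe'
    refine ⟨id, Primrec.id, ?_⟩
    intro x y
    simp only [REq, remOne, Set.mem_insert_iff, Set.mem_empty_iff_false, or_false,
      false_and, and_false, false_or, id_eq]
    constructor
    · rintro (⟨rfl, rfl⟩ | rfl)
      · rfl
      · rfl
    · rintro rfl
      exact Or.inr rfl

theorem lemA1 {X : Set ℕ} {fX : ℕ → Bool} (hprim : Primrec fX)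
    (hfX : ∀ n, n ∈ X ↔ fX n = true) (hXc : Xᶜ.Infinite) (hF : Fast X) :
    PrRed (fun a b : ℕ => a = b) (REq X) := by
  obtain ⟨r, hrprim, hr⟩ := hF
  refine ⟨enum X, enum_primrec hprim hfX hXc hrprim hr, ?_⟩
  intro x y
  constructor
  · rintro rfl; exact Or.inr rfl
  · rintro (⟨hx, _⟩ | h)
    · exact absurd hx (enum_not_mem X hXc x)
    · exact (enum_strictMono X hXc).injective h

theorem lemB1 {X : Set ℕ} {fX : ℕ → Bool} (hprim : Primrec fX)
    (hfX : ∀ n, n ∈ X ↔ fX n = true) (hXc : Xᶜ.Infinite) (hF : Fast X) :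
    PrRed (REq X) (REq (remOne X)) := by
  obtain ⟨r, hrprim, hr⟩ := hF
  have heprim : Primrec (enum X) := enum_primrec hprim hfX hXc hrprim hr
  have hinj := (enum_strictMono X hXc).injective
  have hmem := enum_not_mem X hXc
  have he0 := enum_zero X hXc
  refine ⟨fun x => bif fX x then enum X 0 else enum X (x+1),
    Primrec.cond hprim (heprim.comp (.const 0)) (heprim.comp Primrec.succ), ?_⟩
  have hnm : ∀ k, enum X (k+1) ∉ remOne X := by
    intro k hk
    rw [remOne, Set.mem_insert_iff, ← he0] at hk
    rcases hk with h | h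
    · exact absurd (hinj h) (by omega)
    · exact hmem _ h
  intro x y
  cases hfx : fX x <;> cases hfy : fX y <;>
    simp only [hfx, hfy, cond_false, cond_true]
  · constructor
    · rintro (⟨hx, _⟩ | rfl)
      · rw [hfX x, hfx] at hx; exact absurd hx (by simp)
      · exact Or.inr rfl
    · rintro (⟨hx, _⟩ | h)
      · exact absurd hx (hnm x)
      · have := hinj h
        exact Or.inr (by omega)
  · constructor
    · rintro (⟨hx, _⟩ | rfl)
      · rw [hfX x, hfx] at hx; exact absurd hx (by simp)
      · rw [hfx] at hfy; exact absurd hfy (by simp)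
    · rintro (⟨hx, _⟩ | h)
      · exact absurd hx (hnm x)
      · exact absurd (hinj h) (by omega)
  · constructor
    · rintro (⟨_, hy⟩ | rfl)
      · rw [hfX y, hfy] at hy; exact absurd hy (by simp)
      · rw [hfy] at hfx; exact absurd hfx (by simp)
    · rintro (⟨_, hy⟩ | h)
      · exact absurd hy (hnm y)
      · exact absurd (hinj h.symm) (by omega)
  · constructor
    · intro _
      have h0 : enum X 0 ∈ remOne X := by
        rw [remOne, ← he0]; exact Set.mem_insert _ _
      exact Or.inl ⟨h0, h0⟩
    · intro _
      exact Or.inl ⟨(hfX x).2 hfx, (hfX y).2 hfy⟩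

open Classical in
theorem lemA2 {X : Set ℕ} (h : PrRed (fun a b : ℕ => a = b) (REq X)) : Fast X := by
  obtain ⟨h', hprim, hspec⟩ := h
  have hinj : Function.Injective h' := fun x y hxy => (hspec x y).2 (Or.inr hxy)
  have hone : ∀ x y, h' x ∈ X → h' y ∈ X → x = y := fun x y hx hy =>
    (hspec x y).2 (Or.inl ⟨hx, hy⟩)
  refine ⟨fun s => maxF h' (s+1), (maxF_primrec hprim).comp Primrec.succ, ?_⟩
  intro s
  set T : Finset ℕ := (Finset.range (s+2)).image h' with hT
  have hTcard : T.card = s + 2 := by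
    rw [hT, Finset.card_image_of_injective _ hinj, Finset.card_range]
  have hin : (T.filter fun z => z ∈ X).card ≤ 1 := by
    rw [Finset.card_le_one]
    intro a ha b hb
    obtain ⟨haT, haX⟩ := Finset.mem_filter.1 ha
    obtain ⟨hbT, hbX⟩ := Finset.mem_filter.1 hb
    obtain ⟨x, _, rfl⟩ := Finset.mem_image.1 haT
    obtain ⟨y, _, rfl⟩ := Finset.mem_image.1 hbT
    rw [hone x y haX hbX]
  have hsplit := Finset.card_filter_add_card_filter_not
    (s := T) (p := fun z => z ∈ X)
  have hout : s + 1 ≤ (T.filter fun z => z ∉ X).card := by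
    omega
  have hsub : (T.filter fun z => z ∉ X) ⊆
      (Finset.range (maxF h' (s+1) + 1)).filter fun k => k ∉ X := by
    intro z hz
    obtain ⟨hzT, hzX⟩ := Finset.mem_filter.1 hz
    obtain ⟨x, hx, rfl⟩ := Finset.mem_image.1 hzT
    refine Finset.mem_filter.2 ⟨Finset.mem_range.2 ?_, hzX⟩
    have := le_maxF h' (Nat.lt_succ_iff.1 (Finset.mem_range.1 hx))
    omega
  show s ≤ zc X (maxF h' (s+1))
  rw [zc_eq_card]
  have := Finset.card_le_card hsub
  omega

open Classical in
theorem lemB2 {X : Set ℕ} (hXc : Xᶜ.Infinite)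
    (h : PrRed (REq X) (REq (remOne X))) : Fast X := by
  obtain ⟨g, hgprim, hg⟩ := h
  by_cases hXfin : X.Finite
  · -- X finite: Fast holds trivially
    refine ⟨fun s => s + hXfin.toFinset.card,
      Primrec.nat_add.comp .id (.const _), ?_⟩
    intro s
    show s ≤ zc X (s + hXfin.toFinset.card)
    set N := hXfin.toFinset.card with hN
    set t := s + N with ht
    have h1 : ((Finset.range (t+1)).filter fun k => k ∈ X).card ≤ N := by
      rw [hN]
      apply Finset.card_le_card
      intro z hz
      rw [Set.Finite.mem_toFinset]
      exact (Finset.mem_filter.1 hz).2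
    have h2 := Finset.card_filter_add_card_filter_not
      (s := Finset.range (t+1)) (p := fun k => k ∈ X)
    rw [Finset.card_range] at h2
    rw [zc_eq_card]
    omega
  · -- X infinite
    have hXinf : X.Infinite := hXfin
    obtain ⟨x₀, hx₀⟩ := hXinf.nonempty
    have hmX : sInf Xᶜ ∉ X := Nat.sInf_mem hXc.nonempty
    have hmmem : sInf Xᶜ ∈ remOne X := Set.mem_insert _ _
    have hginj : ∀ x y, x ∉ X → y ∉ X → x ≠ y →
        g x ≠ g y ∧ ¬(g x ∈ remOne X ∧ g y ∈ remOne X) := by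
      intro x y hx hy hxy
      have hne : ¬ REq X x y := by
        rintro (⟨hx', _⟩ | rfl)
        · exact hx hx'
        · exact hxy rfl
      rw [hg] at hne
      exact ⟨fun he => hne (Or.inr he), fun hb' => hne (Or.inl hb')⟩
    have key : ∃ q : ℕ → ℕ, Primrec q ∧ ∀ s, zc X s + 1 ≤ zc X (q s) := by
      by_cases hb : ∃ x, x ∉ X ∧ g x ∈ remOne X
      · -- case (b): some singleton maps into the big class
        obtain ⟨xb, hxbX, hxbR⟩ := hb
        have hgX' : ∀ x, x ∈ X → g x ∉ remOne X := by
          intro x hx hmem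
          have hne : ¬ REq X x xb := by
            rintro (⟨_, h2⟩ | rfl)
            · exact hxbX h2
            · exact hxbX hx
          rw [hg] at hne
          exact hne (Or.inl ⟨hmem, hxbR⟩)
        have hc₀ := hgX' x₀ hx₀
        have hc₀X : g x₀ ∉ X := fun h' => hc₀ (Set.mem_insert_of_mem _ h')
        have hc₀m : g x₀ ≠ sInf Xᶜ := fun h' => hc₀ (h' ▸ hmmem)
        have hsing : ∀ y, y ∉ X → y ≠ xb → g y ∉ remOne X ∧ g y ≠ g x₀ := by
          intro y hy hyb
          constructor
          · intro hmem
            have hne : ¬ REq X y xb := by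
              rintro (⟨h1, _⟩ | rfl)
              · exact hy h1
              · exact hyb rfl
            rw [hg] at hne
            exact hne (Or.inl ⟨hmem, hxbR⟩)
          · intro heq
            have hne : ¬ REq X y x₀ := by
              rintro (⟨h1, _⟩ | rfl)
              · exact hy h1
              · exact hy hx₀
            rw [hg] at hne
            exact hne (Or.inr heq)
        refine ⟨fun s => max (max (sInf Xᶜ) (g x₀)) (maxF g s),
          Primrec.nat_max.comp (.const _) (maxF_primrec hgprim), ?_⟩
        intro s
        show zc X s + 1 ≤ zc X (max (max (sInf Xᶜ) (g x₀)) (maxF g s))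
        set A : Finset ℕ := (Finset.range (s+1)).filter (fun k => k ∉ X) with hA
        set A' : Finset ℕ := A.erase xb with hA'
        set B : Finset ℕ := A'.image g with hB
        have hmemA' : ∀ x ∈ A', x ≤ s ∧ x ∉ X ∧ x ≠ xb := by
          intro x hx
          obtain ⟨hxb, hxA⟩ := Finset.mem_erase.1 hx
          obtain ⟨hxr, hxX⟩ := Finset.mem_filter.1 hxA
          exact ⟨Nat.lt_succ_iff.1 (Finset.mem_range.1 hxr), hxX, hxb⟩
        have hinjOn : Set.InjOn g ↑A' := by
          intro x hx y hy hxy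
          by_contra hne
          exact (hginj x y (hmemA' x hx).2.1 (hmemA' y hy).2.1 hne).1 hxy
        have hBcard : B.card = A'.card := Finset.card_image_of_injOn hinjOn
        have hAA' : A.card ≤ A'.card + 1 := by
          have hsub : A ⊆ insert xb A' := by
            intro z hz
            by_cases hzb : z = xb
            · exact Finset.mem_insert.2 (Or.inl hzb)
            · exact Finset.mem_insert.2 (Or.inr (Finset.mem_erase.2 ⟨hzb, hz⟩))
          calc A.card ≤ (insert xb A').card := Finset.card_le_card hsub
            _ ≤ A'.card + 1 := Finset.card_insert_le _ _
        have hBfacts : ∀ z ∈ B, z ∉ X ∧ z ≠ sInf Xᶜ ∧ z ≠ g x₀ ∧ z ≤ maxF g s := by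
          intro z hz
          obtain ⟨y, hyA', rfl⟩ := Finset.mem_image.1 hz
          obtain ⟨hys, hyX, hyb⟩ := hmemA' y hyA'
          obtain ⟨hnr, hnc⟩ := hsing y hyX hyb
          exact ⟨fun h' => hnr (Set.mem_insert_of_mem _ h'),
            fun h' => hnr (h' ▸ hmmem), hnc, le_maxF g hys⟩
        have hmB : sInf Xᶜ ∉ insert (g x₀) B := by
          intro hmem
          rcases Finset.mem_insert.1 hmem with h' | h'
          · exact hc₀m h'.symm
          · exact (hBfacts _ h').2.1 rfl
        have hcB : g x₀ ∉ B := fun h' => (hBfacts _ h').2.2.1 rfl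
        have hsub2 : insert (sInf Xᶜ) (insert (g x₀) B) ⊆
            (Finset.range (max (max (sInf Xᶜ) (g x₀)) (maxF g s) + 1)).filter
              (fun k => k ∉ X) := by
          intro z hz
          rcases Finset.mem_insert.1 hz with rfl | hz'
          · refine Finset.mem_filter.2 ⟨Finset.mem_range.2 ?_, hmX⟩
            have h1 := le_max_left (sInf Xᶜ) (g x₀)
            have h2 := le_max_left (max (sInf Xᶜ) (g x₀)) (maxF g s)
            omega
          rcases Finset.mem_insert.1 hz' with rfl | hz''
          · refine Finset.mem_filter.2 ⟨Finset.mem_range.2 ?_, hc₀X⟩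
            have h1 := le_max_right (sInf Xᶜ) (g x₀)
            have h2 := le_max_left (max (sInf Xᶜ) (g x₀)) (maxF g s)
            omega
          · obtain ⟨hzX, _, _, hzle⟩ := hBfacts _ hz''
            refine Finset.mem_filter.2 ⟨Finset.mem_range.2 ?_, hzX⟩
            have h2 := le_max_right (max (sInf Xᶜ) (g x₀)) (maxF g s)
            omega
        have hfin := Finset.card_le_card hsub2
        rw [Finset.card_insert_of_notMem hmB, Finset.card_insert_of_notMem hcB] at hfin
        rw [zc_eq_card X s, zc_eq_card X (max (max (sInf Xᶜ) (g x₀)) (maxF g s))]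
        rw [← hA]
        omega
      · -- case (a): no singleton maps into the big class
        push_neg at hb
        refine ⟨fun s => max (sInf Xᶜ) (maxF g s),
          Primrec.nat_max.comp (.const _) (maxF_primrec hgprim), ?_⟩
        intro s
        show zc X s + 1 ≤ zc X (max (sInf Xᶜ) (maxF g s))
        set A : Finset ℕ := (Finset.range (s+1)).filter (fun k => k ∉ X) with hA
        have hmemA : ∀ x ∈ A, x ≤ s ∧ x ∉ X := by
          intro x hx
          obtain ⟨hxr, hxX⟩ := Finset.mem_filter.1 hx
          exact ⟨Nat.lt_succ_iff.1 (Finset.mem_range.1 hxr), hxX⟩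
        have hinjOn : Set.InjOn g ↑A := by
          intro x hx y hy hxy
          by_contra hne
          exact (hginj x y (hmemA x hx).2 (hmemA y hy).2 hne).1 hxy
        set B : Finset ℕ := A.image g with hB
        have hBcard : B.card = A.card := Finset.card_image_of_injOn hinjOn
        have hBfacts : ∀ z ∈ B, z ∉ X ∧ z ≠ sInf Xᶜ ∧ z ≤ maxF g s := by
          intro z hz
          obtain ⟨y, hyA, rfl⟩ := Finset.mem_image.1 hz
          obtain ⟨hys, hyX⟩ := hmemA y hyA
          have hnr := hb y hyX
          exact ⟨fun h' => hnr (Set.mem_insert_of_mem _ h'),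
            fun h' => hnr (h' ▸ hmmem), le_maxF g hys⟩
        have hmB : sInf Xᶜ ∉ B := fun h' => (hBfacts _ h').2.1 rfl
        have hsub2 : insert (sInf Xᶜ) B ⊆
            (Finset.range (max (sInf Xᶜ) (maxF g s) + 1)).filter (fun k => k ∉ X) := by
          intro z hz
          rcases Finset.mem_insert.1 hz with rfl | hz'
          · refine Finset.mem_filter.2 ⟨Finset.mem_range.2 ?_, hmX⟩
            have h1 := le_max_left (sInf Xᶜ) (maxF g s)
            omega
          · obtain ⟨hzX, _, hzle⟩ := hBfacts _ hz'
            refine Finset.mem_filter.2 ⟨Finset.mem_range.2 ?_, hzX⟩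
            have h2 := le_max_right (sInf Xᶜ) (maxF g s)
            omega
        have hfin := Finset.card_le_card hsub2
        rw [Finset.card_insert_of_notMem hmB] at hfin
        rw [zc_eq_card X s, zc_eq_card X (max (sInf Xᶜ) (maxF g s))]
        rw [← hA]
        omega
    obtain ⟨q, hqprim, hq⟩ := key
    refine ⟨iterF q, iterF_primrec hqprim, ?_⟩
    intro s
    induction s with
    | zero => exact Nat.zero_le _
    | succ s ih =>
      have hstep : iterF q (s+1) = q (iterF q s) := rfl
      rw [hstep]
      have := hq (iterF q s)
      omega

end Stmt18Main

theorem stmt_18 (X : Set ℕ) (hX : PRSet X) (hXc : Xᶜ.Infinite) :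
    (PrRed (REq (remOne X)) (REq X) ∧ ¬ PrRed (REq X) (REq (remOne X))) ↔
    (PrRed (REq X) (fun a b : ℕ => a = b) ∧
      ¬ PrRed (fun a b : ℕ => a = b) (REq X)) := by
  obtain ⟨fX, hprim, hfX⟩ := hX
  constructor
  · rintro ⟨-, hnot⟩
    refine ⟨Stmt18Main.lemC hprim hfX, fun hId => hnot ?_⟩
    exact Stmt18Main.lemB1 hprim hfX hXc (Stmt18Main.lemA2 hId)
  · rintro ⟨-, hnot⟩
    refine ⟨Stmt18Main.lemD hXc, fun hred => hnot ?_⟩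
    exact Stmt18Main.lemA1 hprim hfX hXc (Stmt18Main.lemB2 hXc hred)
end
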